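/- Let X and Y be Polish spaces, let G ⊂ X × Y be a compact subset, and let G_X denote the projection of G onto X. Then there exists a Borel measurable map ψ : G_X → Y with the property that (x, ψ(x)) ∈ G for every x ∈ G_X. -/

import Mathlib

open Set Filter Topology

namespace MeasSelAux

variable {X Y : Type*} [TopologicalSpace X] [PolishSpace X] [TopologicalSpace Y] [PolishSpace Y]

/-- The constraint set at step `n`, given `x = p.1` and thresholds `p.2`. -/
def cSet (G : Set (X × Y)) (a : Y → ℕ → ℝ) (n : ℕ) (p : X × (ℕ → ℝ)) : Set Y :=
  {y | (p.1, y) ∈ G ∧ ∀ i < n, a y i ≤ p.2 i}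

open Classical in
/-- The value function: minimum of coordinate `n` over the constraint set, `2` if empty. -/
noncomputable def M (G : Set (X × Y)) (a : Y → ℕ → ℝ) (n : ℕ) (p : X × (ℕ → ℝ)) : ℝ :=
  if (cSet G a n p).Nonempty then sInf ((fun y => a y n) '' cSet G a n p) else 2

/-- The recursively defined minimal values. -/
noncomputable def m (G : Set (X × Y)) (a : Y → ℕ → ℝ) : ℕ → X → ℝ
  | n => fun x => M G a n (x, fun i => if h : i < n then m G a i x else 0)
termination_by n => n
decreasing_by exact h

lemma isCompact_cSet {G : Set (X × Y)} (hG : IsCompact G) {a : Y → ℕ → ℝ}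
    (hacont : ∀ i, Continuous fun y => a y i) (n : ℕ) (p : X × (ℕ → ℝ)) :
    IsCompact (cSet G a n p) := by
  have hsub : cSet G a n p ⊆ Prod.snd '' G := fun y hy => ⟨(p.1, y), hy.1, rfl⟩
  have hcl : IsClosed (cSet G a n p) := by
    have : cSet G a n p =
        {y | (p.1, y) ∈ G} ∩ ⋂ i, ⋂ (_ : i < n), {y | a y i ≤ p.2 i} := by
      ext y; simp [cSet]
    rw [this]
    exact (hG.isClosed.preimage (Continuous.prodMk_right p.1)).inter
      (isClosed_biInter fun i _ => isClosed_le (hacont i) continuous_const)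
  exact (hG.image continuous_snd).of_isClosed_subset hcl hsub

lemma isClosed_witness {G : Set (X × Y)} (hG : IsCompact G) {a : Y → ℕ → ℝ}
    (hacont : ∀ i, Continuous fun y => a y i) (n : ℕ) (c : ℝ) :
    IsClosed {p : X × (ℕ → ℝ) | ∃ y ∈ cSet G a n p, a y n ≤ c} := by
  refine IsSeqClosed.isClosed ?_
  intro pk p hmem hto
  choose y hy hyc using hmem
  have hyK : ∀ k, y k ∈ Prod.snd '' G := fun k => ⟨((pk k).1, y k), (hy k).1, rfl⟩
  obtain ⟨z, hzK, φ, hφ, hzc⟩ := (hG.image continuous_snd).isSeqCompact hyK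
  have hpφ : Tendsto (fun k => pk (φ k)) atTop (𝓝 p) := hto.comp hφ.tendsto_atTop
  have h1 : Tendsto (fun k => ((pk (φ k)).1, y (φ k))) atTop (𝓝 (p.1, z)) :=
    ((continuous_fst.tendsto p).comp hpφ).prodMk_nhds hzc
  have hmemG : (p.1, z) ∈ G :=
    hG.isClosed.mem_of_tendsto h1 (Filter.Eventually.of_forall fun k => (hy (φ k)).1)
  refine ⟨z, ⟨hmemG, fun i hi => ?_⟩, ?_⟩
  · refine le_of_tendsto_of_tendsto' (((hacont i).tendsto z).comp hzc)
      ((((continuous_apply i).comp continuous_snd).tendsto p).comp hpφ)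
      (fun k => (hy (φ k)).2 i hi)
  · exact le_of_tendsto (((hacont n).tendsto z).comp hzc)
      (Filter.Eventually.of_forall fun k => hyc (φ k))

lemma lsc_M {G : Set (X × Y)} (hG : IsCompact G) {a : Y → ℕ → ℝ}
    (hacont : ∀ i, Continuous fun y => a y i) (habd : ∀ y i, |a y i| < 2) (n : ℕ) :
    LowerSemicontinuous (M G a n) := by
  rw [lowerSemicontinuous_iff_isClosed_preimage]
  intro c
  rcases lt_or_ge c 2 with hc | hc
  · have : M G a n ⁻¹' Iic c = {p : X × (ℕ → ℝ) | ∃ y ∈ cSet G a n p, a y n ≤ c} := by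
      ext p
      simp only [mem_preimage, mem_Iic, mem_setOf_eq, M]
      constructor
      · intro h
        split_ifs at h with hne
        · have hcmp := (isCompact_cSet hG hacont n p).image (hacont n)
          obtain ⟨y, hy, hey⟩ := hcmp.sInf_mem (hne.image _)
          exact ⟨y, hy, hey.le.trans h⟩
        · linarith
      · rintro ⟨y, hy, hyc⟩
        rw [if_pos ⟨y, hy⟩]
        exact le_trans (csInf_le ((isCompact_cSet hG hacont n p).image
          (hacont n)).bddBelow ⟨y, hy, rfl⟩) hyc
    rw [this]
    exact isClosed_witness hG hacont n c
  · have : M G a n ⁻¹' Iic c = univ := by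
      refine eq_univ_of_forall fun p => ?_
      simp only [mem_preimage, mem_Iic, M]
      split_ifs with hne
      · obtain ⟨y, _, hey⟩ :=
          ((isCompact_cSet hG hacont n p).image (hacont n)).sInf_mem (hne.image _)
        have h2 := (abs_lt.1 (habd y n)).2
        rw [← hey]
        linarith
      · exact hc
    rw [this]
    exact isClosed_univ

lemma measurable_m [MeasurableSpace X] [BorelSpace X] [SecondCountableTopology X]
    [SecondCountableTopology Y]
    {G : Set (X × Y)} (hG : IsCompact G) {a : Y → ℕ → ℝ}
    (hacont : ∀ i, Continuous fun y => a y i) (habd : ∀ y i, |a y i| < 2) (n : ℕ) :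
    Measurable (m G a n) := by
  induction n using Nat.strong_induction_on with
  | _ n ih =>
    have heq : ∀ x, m G a n x
        = M G a n (x, fun i => if _ : i < n then m G a i x else 0) := fun x => by
      rw [m]
    have hmeas : Measurable fun x : X =>
        ((x, fun i => if _ : i < n then m G a i x else 0) : X × (ℕ → ℝ)) := by
      refine measurable_id.prodMk (measurable_pi_lambda _ fun i => ?_)
      by_cases h : i < n
      · simpa [h] using ih i h
      · simpa [h] using measurable_const
    simpa [funext heq, Function.comp_def] using ((lsc_M hG hacont habd n).measurable).comp hmeas

end MeasSelAux

open MeasSelAux Set in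
/-- Measurable selection: if `G ⊂ X × Y` is compact (with `X`, `Y` Polish) and `G_X` is its
projection onto `X`, then there is a Borel measurable map `ψ : G_X → Y` with
`(x, ψ x) ∈ G` for every `x ∈ G_X`. -/
theorem measurable_selection_of_compact
    {X Y : Type*} [TopologicalSpace X] [PolishSpace X] [MeasurableSpace X] [BorelSpace X]
    [TopologicalSpace Y] [PolishSpace Y] [MeasurableSpace Y] [BorelSpace Y]
    (G : Set (X × Y)) (hG : IsCompact G) :
    ∃ ψ : {x : X // x ∈ Prod.fst '' G} → Y,
      Measurable ψ ∧ ∀ x : {x : X // x ∈ Prod.fst '' G}, ((x : X), ψ x) ∈ G := by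
  -- Embed `Y` into `ℝ^ℕ` via bounded coordinates
  haveI : T3Space Y := by
    letI := TopologicalSpace.metrizableSpaceMetric Y
    infer_instance
  obtain ⟨f, hf⟩ := TopologicalSpace.exists_embedding_l_infty Y
  set a : Y → ℕ → ℝ := fun y n => Real.arctan (f y n) with ha_def
  have hacont : ∀ i, Continuous fun y => a y i := by
    intro i
    have hev : Continuous fun g : BoundedContinuousFunction ℕ ℝ => g i :=
      continuous_eval_const i
    exact Real.continuous_arctan.comp (hev.comp hf.continuous)
  have habd : ∀ y i, |a y i| < 2 := by
    intro y i
    have h1 : Real.arctan (f y i) < Real.pi / 2 := Real.arctan_lt_pi_div_two _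
    have h2 : -(Real.pi / 2) < Real.arctan (f y i) := Real.neg_pi_div_two_lt_arctan _
    have hpi : Real.pi < 3.15 := Real.pi_lt_d2
    rw [abs_lt]
    constructor <;> simp only [ha_def] <;> linarith
  have hainj : Function.Injective a := by
    intro y y' h
    apply hf.injective
    ext n
    exact Real.arctan_injective (congrFun h n)
  -- Constraint sets with the recursively minimal thresholds
  set T : ℕ → X → Set Y := fun n x => {y | (x, y) ∈ G ∧ ∀ i < n, a y i ≤ m G a i x} with hT_def
  have hT_cSet : ∀ n x, T n x = cSet G a n (x, fun i => if _ : i < n then m G a i x else 0) := by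
    intro n x
    ext y
    simp only [hT_def, cSet, mem_setOf_eq]
    constructor
    · rintro ⟨h1, h2⟩
      exact ⟨h1, fun i hi => by simpa [hi] using h2 i hi⟩
    · rintro ⟨h1, h2⟩
      exact ⟨h1, fun i hi => by simpa [hi] using h2 i hi⟩
  have hTcmp : ∀ n x, IsCompact (T n x) := fun n x => by
    rw [hT_cSet]; exact isCompact_cSet hG hacont n _
  have hm_eq : ∀ n x, (T n x).Nonempty →
      m G a n x = sInf ((fun y => a y n) '' T n x) := by
    intro n x hne
    rw [m]
    unfold MeasSelAux.M
    simp only [← hT_cSet n x, if_pos hne]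
    rw [if_pos (hT_cSet n x ▸ hne)]
  -- nonemptiness of the constraint sets, by induction
  have hTne : ∀ x : X, x ∈ Prod.fst '' G → ∀ n, (T n x).Nonempty := by
    intro x hx n
    induction n with
    | zero =>
      obtain ⟨⟨x', y⟩, hmem, rfl⟩ := hx
      exact ⟨y, hmem, fun i hi => absurd hi (Nat.not_lt_zero i)⟩
    | succ n ihn =>
      obtain ⟨y, hy, hey⟩ := ((hTcmp n x).image (hacont n)).sInf_mem (ihn.image _)
      refine ⟨y, hy.1, fun i hi => ?_⟩
      rcases Nat.lt_succ_iff_lt_or_eq.1 hi with h | rfl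
      · exact hy.2 i h
      · rw [hm_eq i x ihn]; exact le_of_eq hey
  -- the selection point at each `x` in the projection
  have hsel : ∀ x : {x : X // x ∈ Prod.fst '' G},
      ∃ y : Y, ((x : X), y) ∈ G ∧ ∀ n, a y n = m G a n (x : X) := by
    rintro ⟨x, hx⟩
    have hsub : ∀ n, T (n + 1) x ⊆ T n x := fun n y hy =>
      ⟨hy.1, fun i hi => hy.2 i (hi.trans (Nat.lt_succ_self n))⟩
    obtain ⟨y, hy⟩ := IsCompact.nonempty_iInter_of_sequence_nonempty_isCompact_isClosed
      (fun n => T n x) hsub (hTne x hx) (hTcmp 0 x) (fun n => (hTcmp n x).isClosed)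
    simp only [mem_iInter] at hy
    refine ⟨y, (hy 0).1, fun n => ?_⟩
    refine le_antisymm ((hy (n + 1)).2 n (Nat.lt_succ_self n)) ?_
    rw [hm_eq n x (hTne x hx n)]
    exact csInf_le ((hTcmp n x).image (hacont n)).bddBelow ⟨y, hy n, rfl⟩
  choose ψ hψG hψa using hsel
  refine ⟨ψ, ?_, hψG⟩
  -- measurability via the measurable embedding `a : Y → ℝ^ℕ`
  have hE : MeasurableEmbedding a :=
    (continuous_pi hacont).measurableEmbedding hainj
  rw [← hE.measurable_comp_iff]
  have : a ∘ ψ = fun x : {x : X // x ∈ Prod.fst '' G} => fun n => m G a n (x : X) :=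
    funext fun x => funext fun n => hψa x n
  rw [this]
  exact measurable_pi_lambda _ fun n =>
    (measurable_m hG hacont habd n).comp measurable_subtype_coe
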